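/- Completeness of the tree rewriting calculus: for any spi-logic L = K⁺ ∪ A with A ⊆ {(4),(m),(J)}, if φ ⊢_L ψ for strictly positive formulas φ, ψ, then T(φ) ↪*_{TL} T(ψ) in the tree rewriting calculus TL = TK⁺ ∪ {μ | (μ) ∈ A}. -/

import Mathlib

inductive MTree : Type where
  | node : List ℕ → List (ℕ × MTree) → MTree

namespace MTree

mutual
def numNodes : MTree → ℕ
  | .node _ Γ => 1 + numNodesL Γ
def numNodesL : List (ℕ × MTree) → ℕ
  | [] => 0
  | (_, t) :: Γ => numNodes t + numNodesL Γ
end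

mutual
def height : MTree → ℕ
  | .node _ [] => 0
  | .node _ (p :: Γ) => heightL (p :: Γ) + 1
def heightL : List (ℕ × MTree) → ℕ
  | [] => 0
  | (_, t) :: Γ => max (height t) (heightL Γ)
end

mutual
def width : MTree → ℕ
  | .node _ [] => 1
  | .node _ (p :: Γ) => max (p :: Γ).length (widthL (p :: Γ))
def widthL : List (ℕ × MTree) → ℕ
  | [] => 0
  | (_, t) :: Γ => max (width t) (widthL Γ)
end

def sum : MTree → MTree → MTree
  | .node Δ Γ, .node Δ' Γ' => .node (Δ ++ Δ') (Γ ++ Γ')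

inductive IsPos : List ℕ → MTree → Prop where
  | nil : ∀ t, IsPos [] t
  | cons : ∀ {Δ : List ℕ} {Γ : List (ℕ × MTree)} {i : ℕ} {k : List ℕ}
      (h : i < Γ.length), IsPos k (Γ.get ⟨i, h⟩).2 → IsPos (i :: k) (.node Δ Γ)

def subtree : List ℕ → MTree → MTree
  | [], t => t
  | i :: k, .node Δ Γ =>
    match Γ[i]? with
    | some p => subtree k p.2
    | none => .node Δ Γ

def replace : List ℕ → MTree → MTree → MTree
  | [], _, s => s
  | i :: k, .node Δ Γ, s =>
      .node Δ (Γ.modify i (fun p => (p.1, replace k p.2 s)))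

inductive RhoPlus : MTree → MTree → Prop where
  | mk : ∀ (Δ : List ℕ) (Γ : List (ℕ × MTree)) (i : ℕ) (h : i < Δ.length),
      RhoPlus (.node Δ Γ) (.node (Δ.get ⟨i, h⟩ :: Δ) Γ)

inductive RhoMinus : MTree → MTree → Prop where
  | mk : ∀ (Δ : List ℕ) (Γ : List (ℕ × MTree)) (i : ℕ), i < Δ.length →
      RhoMinus (.node Δ Γ) (.node (Δ.eraseIdx i) Γ)

inductive Sigma' : MTree → MTree → Prop where
  | mk : ∀ (Δ : List ℕ) (Γ : List (ℕ × MTree)) (i j : ℕ)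
      (hi : i < Γ.length) (hj : j < Γ.length), i ≠ j →
      Sigma' (.node Δ Γ) (.node Δ ((Γ.set i (Γ.get ⟨j, hj⟩)).set j (Γ.get ⟨i, hi⟩)))

inductive PiPlus : MTree → MTree → Prop where
  | mk : ∀ (Δ : List ℕ) (Γ : List (ℕ × MTree)) (i : ℕ) (h : i < Γ.length),
      PiPlus (.node Δ Γ) (.node Δ (Γ.get ⟨i, h⟩ :: Γ))

inductive PiMinus : MTree → MTree → Prop where
  | mk : ∀ (Δ : List ℕ) (Γ : List (ℕ × MTree)) (i : ℕ), i < Γ.length →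
      PiMinus (.node Δ Γ) (.node Δ (Γ.eraseIdx i))

inductive FourR : MTree → MTree → Prop where
  | mk : ∀ (Δ : List ℕ) (Γ : List (ℕ × MTree)) (i : ℕ) (h : i < Γ.length)
      (β : ℕ) (s : MTree),
      Γ.get ⟨i, h⟩ = (β, .node [] [(β, s)]) →
      FourR (.node Δ Γ) (.node Δ (Γ.set i (β, s)))

inductive MonoR : MTree → MTree → Prop where
  | mk : ∀ (Δ : List ℕ) (Γ : List (ℕ × MTree)) (i : ℕ) (h : i < Γ.length)
      (α β : ℕ) (s : MTree),
      Γ.get ⟨i, h⟩ = (α, s) → β < α →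
      MonoR (.node Δ Γ) (.node Δ (Γ.set i (β, s)))

inductive JayR : MTree → MTree → Prop where
  | mk : ∀ (Δ : List ℕ) (Γ : List (ℕ × MTree)) (i j : ℕ)
      (hi : i < Γ.length) (hj : j < Γ.length)
      (α β : ℕ) (Δ' : List ℕ) (Γ' : List (ℕ × MTree)) (s : MTree),
      i ≠ j → Γ.get ⟨i, hi⟩ = (α, .node Δ' Γ') → Γ.get ⟨j, hj⟩ = (β, s) → β < α →
      JayR (.node Δ Γ)
        (.node Δ ((Γ.set i (α, .node Δ' (Γ' ++ [(β, s)]))).eraseIdx j))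

inductive Ax : Type where
  | four | mono | jay
deriving DecidableEq

def axRule : Ax → MTree → MTree → Prop
  | .four => FourR
  | .mono => MonoR
  | .jay  => JayR

def rootStep (A : Set Ax) (t t' : MTree) : Prop :=
  RhoPlus t t' ∨ RhoMinus t t' ∨ Sigma' t t' ∨ PiPlus t t' ∨ PiMinus t t' ∨
    ∃ a ∈ A, axRule a t t'

def deepStep (R : MTree → MTree → Prop) (t t' : MTree) : Prop :=
  ∃ k s', IsPos k t ∧ R (subtree k t) s' ∧ t' = replace k t s'

def Rw (A : Set Ax) : MTree → MTree → Prop :=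
  Relation.ReflTransGen (deepStep (rootStep A))

end MTree

inductive SPF : Type where
  | top
  | var : ℕ → SPF
  | dia : ℕ → SPF → SPF
  | and : SPF → SPF → SPF

namespace SPF

def md : SPF → ℕ
  | .top => 0
  | .var _ => 0
  | .dia _ φ => φ.md + 1
  | .and φ ψ => max φ.md ψ.md

def bigAnd : List SPF → SPF
  | [] => .top
  | φ :: l => .and φ (bigAnd l)

def toTree : SPF → MTree
  | .top => .node [] []
  | .var p => .node [p] []
  | .dia α φ => .node [] [(α, toTree φ)]
  | .and φ ψ => (toTree φ).sum (toTree ψ)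

end SPF

namespace MTree
mutual
def toForm : MTree → SPF
  | .node Δ Γ => .and (SPF.bigAnd (Δ.map .var)) (toFormL Γ)
def toFormL : List (ℕ × MTree) → SPF
  | [] => .top
  | (α, t) :: Γ => .and (.dia α (toForm t)) (toFormL Γ)
end
end MTree

inductive Deriv (A : Set MTree.Ax) : SPF → SPF → Prop where
  | refl (φ) : Deriv A φ φ
  | top (φ) : Deriv A φ .top
  | trans {φ ψ χ} : Deriv A φ ψ → Deriv A ψ χ → Deriv A φ χ
  | andE1 (φ ψ) : Deriv A (.and φ ψ) φ
  | andE2 (φ ψ) : Deriv A (.and φ ψ) ψ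
  | andI {φ ψ χ} : Deriv A φ ψ → Deriv A φ χ → Deriv A φ (.and ψ χ)
  | dist {φ ψ} (α : ℕ) : Deriv A φ ψ → Deriv A (.dia α φ) (.dia α ψ)
  | four (α : ℕ) (φ) : MTree.Ax.four ∈ A → Deriv A (.dia α (.dia α φ)) (.dia α φ)
  | mono (α β : ℕ) (φ) : MTree.Ax.mono ∈ A → β < α → Deriv A (.dia α φ) (.dia β φ)
  | jay (α β : ℕ) (φ ψ) : MTree.Ax.jay ∈ A → β < α →
      Deriv A (.and (.dia α φ) (.dia β ψ)) (.dia α (.and φ (.dia β ψ)))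

inductive RuleKind : Type where
  | rhoP | rhoM | sigma | piP | piM | four | mono | jay
deriving DecidableEq

def RuleKind.rel : RuleKind → MTree → MTree → Prop
  | .rhoP => MTree.RhoPlus
  | .rhoM => MTree.RhoMinus
  | .sigma => MTree.Sigma'
  | .piP => MTree.PiPlus
  | .piM => MTree.PiMinus
  | .four => MTree.FourR
  | .mono => MTree.MonoR
  | .jay => MTree.JayR

def listRw : List RuleKind → MTree → MTree → Prop
  | [], t, s => t = s
  | μ :: Ω, t, s => ∃ u, MTree.deepStep μ.rel t u ∧ listRw Ω u s


set_option maxHeartbeats 1000000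
namespace MTree

variable {A : Set Ax}

lemma rw_head {t u v : MTree} (h : rootStep A t u) (h2 : Rw A u v) : Rw A t v :=
  Relation.ReflTransGen.head ⟨[], u, IsPos.nil t, h, rfl⟩ h2

lemma rw_tail {t u v : MTree} (h : Rw A t u) (h2 : rootStep A u v) : Rw A t v :=
  Relation.ReflTransGen.tail h ⟨[], v, IsPos.nil u, h2, rfl⟩

lemma rw_of_root {t u : MTree} (h : rootStep A t u) : Rw A t u :=
  rw_head h Relation.ReflTransGen.refl

lemma eraseIdx_mid {α : Type*} (Δ : List α) (e : α) (E : List α) :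
    (Δ ++ e :: E).eraseIdx Δ.length = Δ ++ E := by
  induction Δ with
  | nil => rfl
  | cons a Δ ih => simpa [List.eraseIdx] using ih

lemma erase_labels_suffix (Δ E : List ℕ) (Γ : List (ℕ × MTree)) :
    Rw A (node (Δ ++ E) Γ) (node Δ Γ) := by
  induction E with
  | nil => simp only [List.append_nil, List.nil_append]; exact Relation.ReflTransGen.refl
  | cons e E ih =>
    refine rw_head ?_ ih
    refine Or.inr (Or.inl ?_)
    have := RhoMinus.mk (Δ ++ e :: E) Γ Δ.length (by simp)
    rwa [eraseIdx_mid] at this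

lemma erase_children_suffix (Δ : List ℕ) (Γ E : List (ℕ × MTree)) :
    Rw A (node Δ (Γ ++ E)) (node Δ Γ) := by
  induction E with
  | nil => simp only [List.append_nil, List.nil_append]; exact Relation.ReflTransGen.refl
  | cons e E ih =>
    refine rw_head ?_ ih
    refine Or.inr (Or.inr (Or.inr (Or.inr (Or.inl ?_))))
    have := PiMinus.mk Δ (Γ ++ e :: E) Γ.length (by simp)
    rwa [eraseIdx_mid] at this

lemma erase_labels_prefix (E Δ : List ℕ) (Γ : List (ℕ × MTree)) :
    Rw A (node (E ++ Δ) Γ) (node Δ Γ) := by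
  induction E with
  | nil => simp only [List.append_nil, List.nil_append]; exact Relation.ReflTransGen.refl
  | cons e E ih =>
    refine rw_head ?_ ih
    exact Or.inr (Or.inl (RhoMinus.mk (e :: (E ++ Δ)) Γ 0 (by simp)))

lemma erase_children_prefix (Δ : List ℕ) (E Γ : List (ℕ × MTree)) :
    Rw A (node Δ (E ++ Γ)) (node Δ Γ) := by
  induction E with
  | nil => simp only [List.append_nil, List.nil_append]; exact Relation.ReflTransGen.refl
  | cons e E ih =>
    refine rw_head ?_ ih
    exact Or.inr (Or.inr (Or.inr (Or.inr (Or.inl (PiMinus.mk Δ (e :: (E ++ Γ)) 0 (by simp))))))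

lemma rw_top (t : MTree) : Rw A t (node [] []) := by
  cases t with
  | node Δ Γ =>
    refine Relation.ReflTransGen.trans ?_ (erase_children_prefix [] Γ [])
    simpa [Rw] using erase_labels_prefix Δ [] Γ

lemma dup_labels (Δ' : List ℕ) {Δ : List ℕ} (Γ : List (ℕ × MTree))
    (hsub : ∀ x ∈ Δ', x ∈ Δ) : Rw A (node Δ Γ) (node (Δ' ++ Δ) Γ) := by
  induction Δ' with
  | nil => simp only [List.append_nil, List.nil_append]; exact Relation.ReflTransGen.refl
  | cons a Δ'' ih =>
    refine rw_tail (ih fun x hx => hsub x (List.mem_cons_of_mem _ hx)) ?_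
    have ha : a ∈ Δ'' ++ Δ := List.mem_append_right _ (hsub a List.mem_cons_self)
    obtain ⟨⟨i, hi⟩, hget⟩ := List.mem_iff_get.mp ha
    refine Or.inl ?_
    have := RhoPlus.mk (Δ'' ++ Δ) Γ i hi
    rwa [hget] at this

lemma dup_children {Δ : List ℕ} (Γ' : List (ℕ × MTree)) {Γ : List (ℕ × MTree)}
    (hsub : ∀ x ∈ Γ', x ∈ Γ) : Rw A (node Δ Γ) (node Δ (Γ' ++ Γ)) := by
  induction Γ' with
  | nil => simp only [List.append_nil, List.nil_append]; exact Relation.ReflTransGen.refl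
  | cons a Γ'' ih =>
    refine rw_tail (ih fun x hx => hsub x (List.mem_cons_of_mem _ hx)) ?_
    have ha : a ∈ Γ'' ++ Γ := List.mem_append_right _ (hsub a List.mem_cons_self)
    obtain ⟨⟨i, hi⟩, hget⟩ := List.mem_iff_get.mp ha
    refine Or.inr (Or.inr (Or.inr (Or.inl ?_)))
    have := PiPlus.mk Δ (Γ'' ++ Γ) i hi
    rwa [hget] at this

lemma rw_sum_fst (t s : MTree) : Rw A (t.sum s) t := by
  cases t with | node Δ Γ => cases s with | node Δ' Γ' =>
  exact Relation.ReflTransGen.trans (erase_labels_suffix Δ Δ' _) (erase_children_suffix Δ Γ Γ')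

lemma rw_sum_snd (t s : MTree) : Rw A (t.sum s) s := by
  cases t with | node Δ Γ => cases s with | node Δ' Γ' =>
  exact Relation.ReflTransGen.trans (erase_labels_prefix Δ Δ' _) (erase_children_prefix Δ' Γ Γ')

lemma rw_dup (t : MTree) : Rw A t (t.sum t) := by
  cases t with
  | node Δ Γ =>
    exact Relation.ReflTransGen.trans (dup_labels Δ Γ fun x hx => hx)
      (dup_children Γ fun x hx => hx)

lemma rw_comm (t s : MTree) : Rw A (t.sum s) (s.sum t) := by
  cases t with | node Δ Γ => cases s with | node Δ' Γ' =>
  show Rw A (node (Δ ++ Δ') (Γ ++ Γ')) (node (Δ' ++ Δ) (Γ' ++ Γ))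
  have h1 : Rw A (node (Δ ++ Δ') (Γ ++ Γ')) (node (Δ' ++ Δ) (Γ ++ Γ')) := by
    refine Relation.ReflTransGen.trans
      (dup_labels (Δ' ++ Δ) (Γ ++ Γ') fun x hx => by
        simp only [List.mem_append] at hx ⊢; tauto) ?_
    simpa [Rw] using erase_labels_suffix (Δ' ++ Δ) (Δ ++ Δ') (Γ ++ Γ')
  refine h1.trans ?_
  refine Relation.ReflTransGen.trans
    (dup_children (Γ' ++ Γ) fun x hx => by
      simp only [List.mem_append] at hx ⊢; tauto) ?_
  simpa [Rw] using erase_children_suffix (Δ' ++ Δ) (Γ' ++ Γ) (Γ ++ Γ')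

lemma deep_dia {R : MTree → MTree → Prop} {α : ℕ} {t u : MTree}
    (h : deepStep R t u) : deepStep R (node [] [(α, t)]) (node [] [(α, u)]) := by
  obtain ⟨k, s', hp, hr, rfl⟩ := h
  refine ⟨0 :: k, s', IsPos.cons (by simp) (by simpa using hp), ?_, ?_⟩
  · simpa [subtree] using hr
  · show _ = node [] (List.modify [(α, t)] 0 _)
    simp [List.modify]

lemma rw_dia {α : ℕ} {t u : MTree} (h : Rw A t u) :
    Rw A (node [] [(α, t)]) (node [] [(α, u)]) :=
  Relation.ReflTransGen.lift (fun t => node [] [(α, t)]) (fun _ _ h => deep_dia h) _ _ h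

lemma modify_append_left {α : Type*} (f : α → α) {l : List α} (l' : List α) {i : ℕ}
    (h : i < l.length) : List.modify (l ++ l') i f = List.modify l i f ++ l' := by
  induction l generalizing i with
  | nil => simp at h
  | cons a l ih =>
    cases i with
    | zero => simp
    | succ i => simp [ih (by simpa using h)]

theorem _root_.List.get_append {α : Type*} {l₁ l₂ : List α} (n : ℕ) (h : n < l₁.length) :
    (l₁ ++ l₂).get ⟨n, by simp; omega⟩ = l₁.get ⟨n, h⟩ := by
  simp [List.getElem_append_left h]

lemma set_lt {α : Type*} (l l' : List α) (i : ℕ) (h : i < l.length) : i < (l ++ l').length := by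
  simp; omega

lemma root_sum_left {Δ Δ₂ : List ℕ} {Γ Γ₂ : List (ℕ × MTree)} (E : List ℕ)
    (F : List (ℕ × MTree)) (h : rootStep A (node Δ Γ) (node Δ₂ Γ₂)) :
    rootStep A (node (Δ ++ E) (Γ ++ F)) (node (Δ₂ ++ E) (Γ₂ ++ F)) := by
  rcases h with h | h | h | h | h | ⟨a, ha, h⟩
  · cases h with
    | mk _ _ i hi =>
      refine Or.inl ?_
      have := RhoPlus.mk (Δ ++ E) (Γ ++ F) i (set_lt _ _ _ hi)
      rwa [List.get_append i hi] at this
  · cases h with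
    | mk _ _ i hi =>
      refine Or.inr (Or.inl ?_)
      have := RhoMinus.mk (Δ ++ E) (Γ ++ F) i (set_lt _ _ _ hi)
      rwa [List.eraseIdx_append_of_lt_length hi] at this
  · cases h with
    | mk _ _ i j hi hj hne =>
      refine Or.inr (Or.inr (Or.inl ?_))
      have := Sigma'.mk (Δ ++ E) (Γ ++ F) i j (set_lt _ _ _ hi) (set_lt _ _ _ hj) hne
      rwa [List.get_append i hi, List.get_append j hj,
        List.set_append_left _ _ hi,
        List.set_append_left _ _ (by rw [List.length_set]; exact hj)] at this
  · cases h with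
    | mk _ _ i hi =>
      refine Or.inr (Or.inr (Or.inr (Or.inl ?_)))
      have := PiPlus.mk (Δ ++ E) (Γ ++ F) i (set_lt _ _ _ hi)
      rwa [List.get_append i hi] at this
  · cases h with
    | mk _ _ i hi =>
      refine Or.inr (Or.inr (Or.inr (Or.inr (Or.inl ?_))))
      have := PiMinus.mk (Δ ++ E) (Γ ++ F) i (set_lt _ _ _ hi)
      rwa [List.eraseIdx_append_of_lt_length hi] at this
  · refine Or.inr (Or.inr (Or.inr (Or.inr (Or.inr ⟨a, ha, ?_⟩))))
    cases a with
    | four =>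
      cases h with
      | mk _ _ i hi β s hget =>
        have := FourR.mk (Δ ++ E) (Γ ++ F) i (set_lt _ _ _ hi) β s
          (by rwa [List.get_append i hi])
        rwa [List.set_append_left _ _ hi] at this
    | mono =>
      cases h with
      | mk _ _ i hi α β s hget hlt =>
        have := MonoR.mk (Δ ++ E) (Γ ++ F) i (set_lt _ _ _ hi) α β s
          (by rwa [List.get_append i hi]) hlt
        rwa [List.set_append_left _ _ hi] at this
    | jay =>
      cases h with
      | mk _ _ i j hi hj α β Δ' Γ' s hne hgi hgj hlt =>
        have := JayR.mk (Δ ++ E) (Γ ++ F) i j (set_lt _ _ _ hi) (set_lt _ _ _ hj)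
          α β Δ' Γ' s hne (by rwa [List.get_append i hi]) (by rwa [List.get_append j hj]) hlt
        rwa [List.set_append_left _ _ hi,
          List.eraseIdx_append_of_lt_length (by rw [List.length_set]; exact hj)] at this

lemma deep_sum_left {t u : MTree} (s : MTree) (h : deepStep (rootStep A) t u) :
    deepStep (rootStep A) (t.sum s) (u.sum s) := by
  obtain ⟨k, s', hp, hr, rfl⟩ := h
  cases k with
  | nil =>
    cases t with | node Δ Γ =>
    cases s' with | node Δ₂ Γ₂ =>
    cases s with | node Δs Γs =>
    exact ⟨[], _, IsPos.nil _, root_sum_left Δs Γs hr, rfl⟩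
  | cons i k =>
    cases t with | node Δ Γ =>
    cases s with | node Δs Γs =>
    cases hp with
    | cons hi hp' =>
      refine ⟨i :: k, s', IsPos.cons (set_lt _ Γs _ hi) ?_, ?_, ?_⟩
      · rwa [List.get_append i hi]
      · show rootStep A (subtree (i :: k) (node (Δ ++ Δs) (Γ ++ Γs))) s'
        have h1 : (Γ ++ Γs)[i]? = some (Γ.get ⟨i, hi⟩) := by
          rw [List.getElem?_append_left hi]
          simp [List.getElem?_eq_getElem hi]
        have h2 : Γ[i]? = some (Γ.get ⟨i, hi⟩) := by
          simp [List.getElem?_eq_getElem hi]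
        simp only [subtree, h1] at *
        simpa [subtree, h2] using hr
      · show (node Δ (List.modify Γ i (fun p => (p.1, replace k p.2 s')))).sum (node Δs Γs) =
          node (Δ ++ Δs) (List.modify (Γ ++ Γs) i (fun p => (p.1, replace k p.2 s')))
        rw [modify_append_left _ _ hi]
        rfl

lemma rw_sum_left {t u : MTree} (s : MTree) (h : Rw A t u) : Rw A (t.sum s) (u.sum s) := by
  induction h with
  | refl => exact Relation.ReflTransGen.refl
  | tail _ h2 ih => exact ih.tail (deep_sum_left s h2)

lemma rw_sum_right {t u : MTree} (s : MTree) (h : Rw A t u) : Rw A (s.sum t) (s.sum u) :=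
  ((rw_comm s t).trans (rw_sum_left s h)).trans (rw_comm u s)

end MTree

theorem stmt15 (A : Set MTree.Ax) (φ ψ : SPF) (h : Deriv A φ ψ) :
    MTree.Rw A (SPF.toTree φ) (SPF.toTree ψ) := by
  induction h with
  | refl φ => exact Relation.ReflTransGen.refl
  | top φ => exact MTree.rw_top _
  | trans h1 h2 ih1 ih2 => exact ih1.trans ih2
  | andE1 φ ψ => exact MTree.rw_sum_fst _ _
  | andE2 φ ψ => exact MTree.rw_sum_snd _ _
  | andI h1 h2 ih1 ih2 =>
    exact (MTree.rw_dup _).trans ((MTree.rw_sum_left _ ih1).trans (MTree.rw_sum_right _ ih2))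
  | dist α h ih => exact MTree.rw_dia ih
  | four α φ hA =>
    refine MTree.rw_of_root (Or.inr (Or.inr (Or.inr (Or.inr (Or.inr ⟨.four, hA, ?_⟩)))))
    exact MTree.FourR.mk [] [(α, MTree.node [] [(α, SPF.toTree φ)])] 0 (by simp) α
      (SPF.toTree φ) rfl
  | mono α β φ hA hlt =>
    refine MTree.rw_of_root (Or.inr (Or.inr (Or.inr (Or.inr (Or.inr ⟨.mono, hA, ?_⟩)))))
    exact MTree.MonoR.mk [] [(α, SPF.toTree φ)] 0 (by simp) α β (SPF.toTree φ) rfl hlt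
  | jay α β φ ψ hA hlt =>
    refine MTree.rw_of_root (Or.inr (Or.inr (Or.inr (Or.inr (Or.inr ⟨.jay, hA, ?_⟩)))))
    rcases e : SPF.toTree φ with ⟨Δ', Γ'⟩
    have key := MTree.JayR.mk [] [(α, MTree.node Δ' Γ'), (β, SPF.toTree ψ)] 0 1 (by simp)
      (by simp) α β Δ' Γ' (SPF.toTree ψ) (by simp) rfl rfl hlt
    simp only [SPF.toTree, MTree.sum, e]
    convert key using 2; simp [MTree.axRule]
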